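/- Let 𝔖 be a collection of subsets of a set S with |S| = n ≤ 6 such that for any r, s ∈ 𝔖 one has |r △ s| ∈ {0, 4, 6}. Then |𝔖| ≤ 1, 1, 1, 2, 2, 4 for n = 1, 2, 3, 4, 5, 6 respectively. -/
import Mathlib

open Finset

private lemma sd_card' {α : Type*} [DecidableEq α] (a b : Finset α) :
    (symmDiff a b).card + ((a ∩ b).card + (a ∩ b).card) = a.card + b.card := by
  have h1 : symmDiff a b = (a ∪ b) \ (a ∩ b) := by
    rw [symmDiff_eq_sup_sdiff_inf]; rfl
  rw [h1]
  have h2 : (a ∩ b) ⊆ a ∪ b := (inter_subset_left).trans subset_union_left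
  have h3 := Finset.card_sdiff_of_subset h2
  have h4 := Finset.card_union_add_card_inter a b
  have h5 : (a ∩ b).card ≤ (a ∪ b).card := card_le_card h2
  omega

private lemma key_lemma {α : Type*} [DecidableEq α] (S : Finset α)
    (n : ℕ) (hn1 : 1 ≤ n) (hn6 : n ≤ 6) (hS : S.card = n)
    (T : Finset (Finset α)) (h0 : (∅ : Finset α) ∈ T)
    (hsub : ∀ s ∈ T, s ⊆ S)
    (hdiff : ∀ r ∈ T, ∀ s ∈ T, (symmDiff r s).card ∈ ({0, 4, 6} : Set ℕ)) :
    T.card ≤ [1, 1, 1, 2, 2, 4].getD (n - 1) 0 := by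
  have hd : ∀ r ∈ T, ∀ s ∈ T, (symmDiff r s).card = 0 ∨ (symmDiff r s).card = 4 ∨
      (symmDiff r s).card = 6 := by
    intro r hr s hs
    have := hdiff r hr s hs
    simpa [Set.mem_insert_iff, Set.mem_singleton_iff] using this
  have heq0 : ∀ a b : Finset α, (symmDiff a b).card = 0 → a = b := by
    intro a b h
    have : symmDiff a b = ∅ := card_eq_zero.1 h
    exact symmDiff_eq_bot.1 this
  have hcard : ∀ t ∈ T, t.card = 0 ∨ t.card = 4 ∨ t.card = 6 := by
    intro t ht
    have h := hd t ht ∅ h0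
    have hte : symmDiff t (∅ : Finset α) = t := by simp
    rwa [hte] at h
  have hle : ∀ t ∈ T, t.card ≤ n := fun t ht => hS ▸ card_le_card (hsub t ht)
  have hsdle : ∀ a ∈ T, ∀ b ∈ T, (symmDiff a b).card ≤ n := by
    intro a ha b hb
    have h1 : symmDiff a b ⊆ S :=
      (symmDiff_le_sup (a := a) (b := b)).trans (union_subset (hsub a ha) (hsub b hb))
    exact hS ▸ card_le_card h1
  interval_cases n
  -- n = 1, 2, 3
  · refine card_le_one.2 fun a ha b hb => heq0 a b ?_
    have := hd a ha b hb; have := hsdle a ha b hb; omega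
  · refine card_le_one.2 fun a ha b hb => heq0 a b ?_
    have := hd a ha b hb; have := hsdle a ha b hb; omega
  · refine card_le_one.2 fun a ha b hb => heq0 a b ?_
    have := hd a ha b hb; have := hsdle a ha b hb; omega
  -- n = 4
  · have hT : T ⊆ {∅, S} := by
      intro t ht
      rcases hcard t ht with h | h | h
      · simp [card_eq_zero.1 h]
      · have : t = S := eq_of_subset_of_card_le (hsub t ht) (by omega)
        simp [this]
      · have := hle t ht; omega
    calc T.card ≤ ({∅, S} : Finset (Finset α)).card := card_le_card hT
      _ ≤ 2 := (card_insert_le _ _).trans (by simp)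
  -- n = 5
  · have h1 : (T.erase ∅).card ≤ 1 := by
      refine card_le_one.2 fun a ha b hb => ?_
      obtain ⟨ha0, haT⟩ := mem_erase.1 ha
      obtain ⟨hb0, hbT⟩ := mem_erase.1 hb
      have hca : a.card = 4 := by
        rcases hcard a haT with h | h | h
        · exact absurd (card_eq_zero.1 h) ha0
        · exact h
        · have := hle a haT; omega
      have hcb : b.card = 4 := by
        rcases hcard b hbT with h | h | h
        · exact absurd (card_eq_zero.1 h) hb0
        · exact h
        · have := hle b hbT; omega
      have hsd := sd_card' a b
      have h4 := Finset.card_union_add_card_inter a b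
      have hun : (a ∪ b).card ≤ 5 :=
        hS ▸ card_le_card (union_subset (hsub a haT) (hsub b hbT))
      have := hd a haT b hbT
      exact heq0 a b (by omega)
    have h2 := card_erase_add_one h0
    show T.card ≤ 2
    omega
  -- n = 6
  · by_cases hSin : S ∈ T
    · have hT : T ⊆ {∅, S} := by
        intro t ht
        rcases hcard t ht with h | h | h
        · simp [card_eq_zero.1 h]
        · exfalso
          have hts : symmDiff t S = S \ t := by
            rw [symmDiff_eq_sup_sdiff_inf, sup_eq_union, inf_eq_inter,
              Finset.union_eq_right.2 (hsub t ht), Finset.inter_eq_left.2 (hsub t ht)]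
          have hc : (symmDiff t S).card = 2 := by
            rw [hts, card_sdiff_of_subset (hsub t ht)]; omega
          have := hd t ht S hSin
          omega
        · have : t = S := eq_of_subset_of_card_le (hsub t ht) (by omega)
          simp [this]
      calc T.card ≤ ({∅, S} : Finset (Finset α)).card := card_le_card hT
        _ ≤ 2 := (card_insert_le _ _).trans (by simp)
        _ ≤ 4 := by omega
    · -- all nonempty members have card 4, complements are pairwise disjoint 2-sets
      have hc4 : ∀ t ∈ T.erase ∅, t.card = 4 := by
        intro t ht
        obtain ⟨ht0, htT⟩ := mem_erase.1 ht
        rcases hcard t htT with h | h | h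
        · exact absurd (card_eq_zero.1 h) ht0
        · exact h
        · exact absurd (eq_of_subset_of_card_le (hsub t htT) (by omega)) fun he => hSin (he ▸ htT)
      have hun : ∀ a ∈ T.erase ∅, ∀ b ∈ T.erase ∅, a ≠ b → a ∪ b = S := by
        intro a ha b hb hab
        obtain ⟨ha0, haT⟩ := mem_erase.1 ha
        obtain ⟨hb0, hbT⟩ := mem_erase.1 hb
        have hsd := sd_card' a b
        have h4 := Finset.card_union_add_card_inter a b
        have hssub : a ∪ b ⊆ S := union_subset (hsub a haT) (hsub b hbT)
        have hunle : (a ∪ b).card ≤ 6 := hS ▸ card_le_card hssub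
        have hne : (symmDiff a b).card ≠ 0 := fun h => hab (heq0 a b h)
        have := hd a haT b hbT
        have hca := hc4 a ha
        have hcb := hc4 b hb
        exact eq_of_subset_of_card_le hssub (by omega)
      set U := (T.erase ∅).image (fun t => S \ t) with hU
      have hinj : Set.InjOn (fun t => S \ t) (T.erase ∅) := by
        intro a ha b hb h
        have haT := (mem_erase.1 ha).2
        have hbT := (mem_erase.1 hb).2
        have h' : S \ a = S \ b := h
        rw [← Finset.sdiff_sdiff_eq_self (hsub a haT), h',
          Finset.sdiff_sdiff_eq_self (hsub b hbT)]
      have hUcard : U.card = (T.erase ∅).card := card_image_of_injOn hinj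
      have hU2 : ∀ u ∈ U, u.card = 2 := by
        intro u hu
        obtain ⟨t, ht, rfl⟩ := mem_image.1 hu
        rw [card_sdiff_of_subset (hsub t (mem_erase.1 ht).2)]
        have := hc4 t ht
        omega
      have hdisj : ∀ u ∈ U, ∀ v ∈ U, u ≠ v → Disjoint (id u) (id v) := by
        intro u hu v hv huv
        obtain ⟨a, ha, rfl⟩ := mem_image.1 hu
        obtain ⟨b, hb, rfl⟩ := mem_image.1 hv
        have hab : a ≠ b := fun h => huv (by rw [h])
        have hS' : a ∪ b = S := hun a ha b hb hab
        simp only [id_eq, disjoint_iff_inter_eq_empty]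
        have h' : S \ a ∩ (S \ b) = S \ (a ∪ b) := by
          ext x; simp; tauto
        rw [h', hS', sdiff_self]
        rfl
      have hbi : (U.biUnion id).card = 2 * U.card := by
        rw [Finset.card_biUnion hdisj]
        have h2 : ∀ u ∈ U, (id u).card = 2 := fun u hu => hU2 u hu
        rw [Finset.sum_congr rfl h2, Finset.sum_const, smul_eq_mul]
        ring
      have hbisub : U.biUnion id ⊆ S := by
        intro x hx
        obtain ⟨u, hu, hxu⟩ := mem_biUnion.1 hx
        obtain ⟨t, _, rfl⟩ := mem_image.1 hu
        exact (sdiff_subset) hxu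
      have : (U.biUnion id).card ≤ 6 := hS ▸ card_le_card hbisub
      have hU3 : U.card ≤ 3 := by omega
      have h2 := card_erase_add_one h0
      show T.card ≤ 4
      omega

/-- The cases n ≤ 6 of Lemma `lem.max.set.D`. -/
theorem subset_system_card_le_six {α : Type*} [DecidableEq α] (S : Finset α)
    (n : ℕ) (hn1 : 1 ≤ n) (hn6 : n ≤ 6) (hS : S.card = n)
    (𝔖 : Finset (Finset α)) (hsub : ∀ s ∈ 𝔖, s ⊆ S)
    (hdiff : ∀ r ∈ 𝔖, ∀ s ∈ 𝔖, (symmDiff r s).card ∈ ({0, 4, 6} : Set ℕ)) :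
    𝔖.card ≤ [1, 1, 1, 2, 2, 4].getD (n - 1) 0 := by
  rcases Finset.eq_empty_or_nonempty 𝔖 with h | ⟨r₀, hr₀⟩
  · subst h; simp only [card_empty]; exact Nat.zero_le _
  · set T := 𝔖.image (fun s => symmDiff r₀ s) with hT
    have hinj : Set.InjOn (fun s => symmDiff r₀ s) 𝔖 := by
      intro a _ b _ h
      have := congrArg (fun x => symmDiff r₀ x) h
      simpa [symmDiff_symmDiff_cancel_left] using this
    have hTcard : T.card = 𝔖.card := card_image_of_injOn hinj
    have h0 : (∅ : Finset α) ∈ T := mem_image.2 ⟨r₀, hr₀, by simp⟩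
    have hsub' : ∀ t ∈ T, t ⊆ S := by
      intro t ht
      obtain ⟨s, hs, rfl⟩ := mem_image.1 ht
      exact (symmDiff_le_sup).trans (union_subset (hsub r₀ hr₀) (hsub s hs))
    have hdiff' : ∀ a ∈ T, ∀ b ∈ T, (symmDiff a b).card ∈ ({0, 4, 6} : Set ℕ) := by
      intro a ha b hb
      obtain ⟨x, hx, rfl⟩ := mem_image.1 ha
      obtain ⟨y, hy, rfl⟩ := mem_image.1 hb
      have : symmDiff (symmDiff r₀ x) (symmDiff r₀ y) = symmDiff x y := by
        rw [symmDiff_symmDiff_symmDiff_comm, symmDiff_self]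
        simp
      rw [this]
      exact hdiff x hx y hy
    exact hTcard ▸ key_lemma S n hn1 hn6 hS T h0 hsub' hdiff'
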